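/- Let n ≥ 2 be an integer, let γ ≥ λ > 0, and set α = (γ/λ)^{1/n}. Let I ⊆ ℝ be an open interval, let φ : I → ℝ be a positive C² function satisfying φ(β)(1 + (φ'(β)/(n−1))²)^{(n−1)/2} = 1/γ for all β ∈ I, and let u : I → ℝ be a continuous positive viscosity supersolution of ψ(1 + (ψ'/(n−1))²)^{(n−1)/2} = 1/λ on I. Then u/(αφ) cannot attain a local minimum value strictly less than 1 at any interior point: there is no β₀ ∈ I with u(β₀)/(αφ(β₀)) < 1 and u(β)/(αφ(β)) ≥ u(β₀)/(αφ(β₀)) for all β in a neighborhood of β₀. -/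

import Mathlib

open Filter

/-- `u` is a viscosity supersolution of `ψ(1 + (ψ'/(n−1))²)^((n−1)/2) = 1/λ` on `I`:
for every `β₀ ∈ I` and every `C²` test function `ψ` with `ψ ≤ u` near `β₀` (within `I`)
and `ψ(β₀) = u(β₀)`, one has `ψ(β₀)(1 + (ψ'(β₀)/(n−1))²)^((n−1)/2) ≥ 1/λ`. -/
def IsViscositySupersolution1 (n : ℕ) (lam : ℝ) (I : Set ℝ) (u : ℝ → ℝ) : Prop :=
  ∀ β₀ ∈ I, ∀ ψ : ℝ → ℝ, ContDiffAt ℝ 2 ψ β₀ →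
    (∀ᶠ β in nhdsWithin β₀ I, ψ β ≤ u β) → ψ β₀ = u β₀ →
    ψ β₀ * (1 + (deriv ψ β₀ / ((n : ℝ) - 1)) ^ 2) ^ (((n : ℝ) - 1) / 2) ≥ 1 / lam

theorem no_local_min_of_scaled_ratio_below_one
    (n : ℕ) (hn : 2 ≤ n) (γ lam : ℝ) (hlam : 0 < lam) (hγlam : lam ≤ γ)
    (α : ℝ) (hα : α = (γ / lam) ^ ((1 : ℝ) / (n : ℝ)))
    (I : Set ℝ) (hIopen : IsOpen I) (hIconn : I.OrdConnected)
    (u φ : ℝ → ℝ)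
    (hφ_pos : ∀ β ∈ I, 0 < φ β)
    (hφ_C2 : ∀ β ∈ I, ContDiffAt ℝ 2 φ β)
    (hφ_eq : ∀ β ∈ I, φ β * (1 + (deriv φ β / ((n : ℝ) - 1)) ^ 2) ^ (((n : ℝ) - 1) / 2)
      = 1 / γ)
    (hu_cont : ContinuousOn u I) (hu_pos : ∀ β ∈ I, 0 < u β)
    (hu_visc : IsViscositySupersolution1 n lam I u) :
    ¬ ∃ β₀ ∈ I, u β₀ / (α * φ β₀) < 1 ∧
      ∀ᶠ β in nhdsWithin β₀ I, u β₀ / (α * φ β₀) ≤ u β / (α * φ β) := by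
  rintro ⟨β₀, hβ₀, hlt, hmin⟩
  have hγ : 0 < γ := lt_of_lt_of_le hlam hγlam
  have hφ0 := hφ_pos β₀ hβ₀
  have hu0 := hu_pos β₀ hβ₀
  have hn2 : (2 : ℝ) ≤ (n : ℝ) := by exact_mod_cast hn
  have hn0 : (0 : ℝ) < (n : ℝ) := by linarith
  have hratio1 : (1 : ℝ) ≤ γ / lam := by rw [le_div_iff₀ hlam]; linarith
  have hα1 : 1 ≤ α := by
    rw [hα]; exact Real.one_le_rpow hratio1 (by positivity)
  have hα0 : 0 < α := lt_of_lt_of_le one_pos hα1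
  set c := u β₀ / φ β₀ with hc
  have hc0 : 0 < c := div_pos hu0 hφ0
  have hcα : c < α := by
    rw [div_lt_one (by positivity)] at hlt
    rw [hc, div_lt_iff₀ hφ0]; nlinarith
  have hψle : ∀ᶠ β in nhdsWithin β₀ I, c * φ β ≤ u β := by
    filter_upwards [hmin, self_mem_nhdsWithin] with β hβ hβI
    have hφβ := hφ_pos β hβI
    rw [div_le_div_iff₀ (by positivity) (by positivity)] at hβ
    rw [hc, div_mul_eq_mul_div, div_le_iff₀ hφ0]
    nlinarith
  have hdφ : DifferentiableAt ℝ φ β₀ := (hφ_C2 β₀ hβ₀).differentiableAt two_ne_zero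
  have hψC2 : ContDiffAt ℝ 2 (fun β => c * φ β) β₀ := contDiffAt_const.mul (hφ_C2 β₀ hβ₀)
  have hψβ₀ : c * φ β₀ = u β₀ := div_mul_cancel₀ _ hφ0.ne'
  have hvs := hu_visc β₀ hβ₀ (fun β => c * φ β) hψC2 hψle hψβ₀
  have hderiv : deriv (fun β => c * φ β) β₀ = c * deriv φ β₀ := by
    rw [deriv_const_mul _ hdφ]
  rw [hderiv] at hvs
  set d := deriv φ β₀ / ((n : ℝ) - 1) with hd
  set p := (((n : ℝ) - 1) / 2) with hp
  have hp0 : 0 ≤ p := by rw [hp]; linarith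
  have hrw : c * deriv φ β₀ / ((n : ℝ) - 1) = c * d := by rw [hd, mul_div_assoc]
  rw [hrw] at hvs
  set M := max 1 c with hM
  have hM0 : 0 < M := lt_of_lt_of_le one_pos (le_max_left _ _)
  have hcM : c ≤ M := le_max_right _ _
  have h1M : 1 ≤ M := le_max_left _ _
  have hkey : 1 + (c * d) ^ 2 ≤ M ^ 2 * (1 + d ^ 2) := by
    nlinarith [sq_nonneg d, pow_le_pow_left₀ hc0.le hcM 2, pow_le_pow_left₀ zero_le_one h1M 2]
  have h1 : (1 + (c * d) ^ 2) ^ p ≤ (M ^ 2 * (1 + d ^ 2)) ^ p :=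
    Real.rpow_le_rpow (by positivity) hkey hp0
  have h2 : (M ^ 2 * (1 + d ^ 2)) ^ p = M ^ ((n : ℝ) - 1) * (1 + d ^ 2) ^ p := by
    rw [Real.mul_rpow (by positivity) (by positivity)]
    congr 1
    rw [show (M ^ 2 : ℝ) = M ^ ((2 : ℕ) : ℝ) by rw [Real.rpow_natCast],
      ← Real.rpow_mul hM0.le]
    norm_num [hp]
    ring_nf
  have hφeq : φ β₀ * (1 + d ^ 2) ^ p = 1 / γ := hφ_eq β₀ hβ₀
  have hchain : (1 : ℝ) / lam ≤ c * M ^ ((n : ℝ) - 1) * (1 / γ) := by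
    calc (1 : ℝ) / lam ≤ c * φ β₀ * (1 + (c * d) ^ 2) ^ p := hvs
      _ ≤ c * φ β₀ * (M ^ ((n : ℝ) - 1) * (1 + d ^ 2) ^ p) := by
          rw [← h2]
          exact mul_le_mul_of_nonneg_left h1 (by positivity)
      _ = c * M ^ ((n : ℝ) - 1) * (φ β₀ * (1 + d ^ 2) ^ p) := by ring
      _ = c * M ^ ((n : ℝ) - 1) * (1 / γ) := by rw [hφeq]
  have hαn : α ^ ((n : ℝ)) = γ / lam := by
    rw [hα, ← Real.rpow_mul (by positivity), one_div_mul_cancel hn0.ne',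
      Real.rpow_one]
  have hfinal : c * M ^ ((n : ℝ) - 1) < γ / lam := by
    rcases le_or_gt c 1 with hc1 | hc1
    · have hM1 : M = 1 := max_eq_left hc1
      rw [hM1, Real.one_rpow, mul_one]
      calc c < α := hcα
        _ = (γ / lam) ^ ((1 : ℝ) / (n : ℝ)) := hα
        _ ≤ (γ / lam) ^ (1 : ℝ) := by
            apply Real.rpow_le_rpow_of_exponent_le hratio1
            rw [div_le_one hn0]; linarith
        _ = γ / lam := Real.rpow_one _
    · have hMc : M = c := max_eq_right hc1.le
      rw [hMc]
      calc c * c ^ ((n : ℝ) - 1) = c ^ (1 : ℝ) * c ^ ((n : ℝ) - 1) := by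
            rw [Real.rpow_one]
        _ = c ^ ((n : ℝ)) := by rw [← Real.rpow_add hc0]; ring_nf
        _ < α ^ ((n : ℝ)) := Real.rpow_lt_rpow hc0.le hcα hn0
        _ = γ / lam := hαn
  have h3 : c * M ^ ((n : ℝ) - 1) * (1 / γ) < (γ / lam) * (1 / γ) :=
    mul_lt_mul_of_pos_right hfinal (by positivity)
  have h4 : (γ / lam) * (1 / γ) = 1 / lam := by field_simp
  linarith
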